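/- Restriction estimate for large Sidon sets: let E ⊆ F^d be a Sidon set with |E| ≥ c·|F|^{d/2} for some constant c > 0, and let μ be the surface measure on E. Then ‖(fμ)^∧‖_{L^8(F^d)} ≤ C(c,d)·‖f‖_{L²(μ)} for all f: F^d → ℂ, with C(c,d) independent of |F|. -/

import Mathlib

set_option linter.unusedSectionVars false
set_option linter.unusedVariables false
set_option maxHeartbeats 4000000


open Finset

/-- The finite field Fourier transform: `ĝ(ξ) = Σ_x g(x) χ(−ξ·x)`. -/
noncomputable def dft {F : Type*} [Field F] [Fintype F] {d : ℕ}
    (χ : AddChar F ℂ) (g : (Fin d → F) → ℂ) (ξ : Fin d → F) : ℂ :=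
  ∑ x : Fin d → F, g x * χ (-(∑ i, ξ i * x i))

/-- The surface (uniform probability) measure on `E ⊆ F^d`. -/
noncomputable def surfMeasure {F : Type*} [Field F] [Fintype F] [DecidableEq F]
    {d : ℕ} (E : Finset (Fin d → F)) (x : Fin d → F) : ℝ :=
  (if x ∈ E then (1 : ℝ) else 0) / E.card

section helpers

variable {F : Type} [Field F] [Fintype F] [DecidableEq F] {d : ℕ}

lemma char_norm (χ : AddChar F ℂ) (t : F) : ‖χ t‖ = 1 := by
  have h : 0 < ringChar F := Nat.pos_of_ne_zero (CharP.ringChar_ne_zero_of_finite F)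
  exact Complex.norm_eq_one_of_mem_rootsOfUnity (χ.val_mem_rootsOfUnity t h)

lemma char_conj (χ : AddChar F ℂ) (t : F) : (starRingEnd ℂ) (χ t) = χ (-t) := by
  have h : 0 < ringChar F := Nat.pos_of_ne_zero (CharP.ringChar_ne_zero_of_finite F)
  rw [AddChar.starComp_apply h, AddChar.inv_apply]

lemma char_map_sum (χ : AddChar F ℂ) {ι : Type*} (s : Finset ι) (g : ι → F) :
    χ (∑ i ∈ s, g i) = ∏ i ∈ s, χ (g i) := by
  induction s using Finset.cons_induction with
  | empty => simp
  | cons a s ha ih => rw [Finset.sum_cons, Finset.prod_cons, AddChar.map_add_eq_mul, ih]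

lemma orth (χ : AddChar F ℂ) (hχ : χ ≠ 1) (s : Fin d → F) :
    ∑ ξ : Fin d → F, χ (∑ i, ξ i * s i)
      = if s = 0 then ((Fintype.card F : ℂ)) ^ d else 0 := by
  have hprim := AddChar.IsPrimitive.of_ne_one hχ
  calc ∑ ξ : Fin d → F, χ (∑ i, ξ i * s i)
      = ∑ ξ : Fin d → F, ∏ i, χ (ξ i * s i) := by
        exact Finset.sum_congr rfl fun ξ _ => char_map_sum χ _ _
    _ = ∏ i : Fin d, ∑ t : F, χ (t * s i) := by
        rw [Finset.prod_univ_sum]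
        rw [Fintype.piFinset_univ]
    _ = ∏ i : Fin d, (if s i = 0 then (Fintype.card F : ℂ) else 0) := by
        refine Finset.prod_congr rfl fun i _ => ?_
        rw [AddChar.sum_mulShift (s i) hprim]
        split_ifs <;> simp
    _ = if s = 0 then ((Fintype.card F : ℂ)) ^ d else 0 := by
        by_cases hs : s = 0
        · simp [hs, Finset.card_univ]
        · obtain ⟨i, hi⟩ : ∃ i, s i ≠ 0 := by
            by_contra h
            push_neg at h
            exact hs (funext h)
          rw [if_neg hs]
          exact Finset.prod_eq_zero (Finset.mem_univ i) (by simp [hi])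

/-- The fourth moment bound for Sidon sets. -/
lemma fourth_moment (χ : AddChar F ℂ) (hχ : χ ≠ 1) (E : Finset (Fin d → F))
    (hSid : ∀ a ∈ E, ∀ b ∈ E, ∀ c' ∈ E, ∀ e ∈ E,
        a + b = c' + e → (a = c' ∧ b = e) ∨ (a = e ∧ b = c'))
    (f : (Fin d → F) → ℂ) :
    ∑ ξ : Fin d → F, ‖∑ x ∈ E, f x * χ (-(∑ i, ξ i * x i))‖ ^ 4
      ≤ 2 * (Fintype.card F : ℝ) ^ d * (∑ x ∈ E, ‖f x‖ ^ 2) ^ 2 := by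
  classical
  set q : ℕ := Fintype.card F with hq
  set S : (Fin d → F) → ℂ := fun ξ => ∑ x ∈ E, f x * χ (-(∑ i, ξ i * x i)) with hSdef
  have hconj : ∀ ξ, (starRingEnd ℂ) (S ξ)
      = ∑ x ∈ E, (starRingEnd ℂ) (f x) * χ (∑ i, ξ i * x i) := by
    intro ξ
    rw [hSdef]
    simp only [map_sum, map_mul, char_conj, neg_neg]
  have h1 : ∀ ξ, ((‖S ξ‖ ^ 4 : ℝ) : ℂ)
      = S ξ * S ξ * (starRingEnd ℂ) (S ξ) * (starRingEnd ℂ) (S ξ) := by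
    intro ξ
    have h2 : ((‖S ξ‖ ^ 2 : ℝ) : ℂ) = S ξ * (starRingEnd ℂ) (S ξ) := by
      rw [Complex.sq_norm, Complex.mul_conj]
    calc ((‖S ξ‖ ^ 4 : ℝ) : ℂ)
        = (((‖S ξ‖ ^ 2 : ℝ) : ℂ)) ^ 2 := by push_cast; ring
      _ = (S ξ * (starRingEnd ℂ) (S ξ)) ^ 2 := by rw [h2]
      _ = _ := by ring
  have expand : ∀ ξ : Fin d → F,
      S ξ * S ξ * (starRingEnd ℂ) (S ξ) * (starRingEnd ℂ) (S ξ)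
      = ∑ a ∈ E, ∑ b ∈ E, ∑ c' ∈ E, ∑ e ∈ E,
          ((starRingEnd ℂ) (f a) * (starRingEnd ℂ) (f b) * f c' * f e)
            * χ (∑ i, ξ i * (a i + b i - c' i - e i)) := by
    intro ξ
    rw [hconj]
    rw [hSdef]
    simp only [Finset.sum_mul, Finset.mul_sum]
    refine Finset.sum_congr rfl fun a _ => Finset.sum_congr rfl fun b _ =>
      Finset.sum_congr rfl fun c' _ => Finset.sum_congr rfl fun e _ => ?_
    have hadd : χ (∑ i, ξ i * (a i + b i - c' i - e i))
        = χ (∑ i, ξ i * a i) * χ (∑ i, ξ i * b i)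
            * χ (-(∑ i, ξ i * c' i)) * χ (-(∑ i, ξ i * e i)) := by
      rw [← AddChar.map_add_eq_mul, ← AddChar.map_add_eq_mul, ← AddChar.map_add_eq_mul]
      congr 1
      have hterm : ∀ i, ξ i * (a i + b i - c' i - e i)
          = ξ i * a i + ξ i * b i - ξ i * c' i - ξ i * e i := fun i => by ring
      simp_rw [hterm]
      rw [Finset.sum_sub_distrib, Finset.sum_sub_distrib, Finset.sum_add_distrib]
      ring
    rw [hadd]
    ring
  have key : ((∑ ξ : Fin d → F, ‖S ξ‖ ^ 4 : ℝ) : ℂ)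
      = ∑ a ∈ E, ∑ b ∈ E, ∑ c' ∈ E, ∑ e ∈ E,
          ((starRingEnd ℂ) (f a) * (starRingEnd ℂ) (f b) * f c' * f e)
            * (if a + b = c' + e then ((q : ℂ)) ^ d else 0) := by
    calc ((∑ ξ : Fin d → F, ‖S ξ‖ ^ 4 : ℝ) : ℂ)
        = ∑ ξ : Fin d → F, ((‖S ξ‖ ^ 4 : ℝ) : ℂ) := by push_cast; rfl
      _ = ∑ ξ : Fin d → F,
            S ξ * S ξ * (starRingEnd ℂ) (S ξ) * (starRingEnd ℂ) (S ξ) :=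
          Finset.sum_congr rfl fun ξ _ => h1 ξ
      _ = ∑ ξ : Fin d → F, ∑ a ∈ E, ∑ b ∈ E, ∑ c' ∈ E, ∑ e ∈ E,
            ((starRingEnd ℂ) (f a) * (starRingEnd ℂ) (f b) * f c' * f e)
              * χ (∑ i, ξ i * (a i + b i - c' i - e i)) :=
          Finset.sum_congr rfl fun ξ _ => expand ξ
      _ = ∑ a ∈ E, ∑ b ∈ E, ∑ c' ∈ E, ∑ e ∈ E,
            ((starRingEnd ℂ) (f a) * (starRingEnd ℂ) (f b) * f c' * f e)
              * ∑ ξ : Fin d → F, χ (∑ i, ξ i * (a i + b i - c' i - e i)) := by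
          rw [Finset.sum_comm]
          refine Finset.sum_congr rfl fun a _ => ?_
          rw [Finset.sum_comm]
          refine Finset.sum_congr rfl fun b _ => ?_
          rw [Finset.sum_comm]
          refine Finset.sum_congr rfl fun c' _ => ?_
          rw [Finset.sum_comm]
          refine Finset.sum_congr rfl fun e _ => ?_
          rw [← Finset.mul_sum]
      _ = ∑ a ∈ E, ∑ b ∈ E, ∑ c' ∈ E, ∑ e ∈ E,
            ((starRingEnd ℂ) (f a) * (starRingEnd ℂ) (f b) * f c' * f e)
              * (if a + b = c' + e then ((q : ℂ)) ^ d else 0) := by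
          refine Finset.sum_congr rfl fun a _ => Finset.sum_congr rfl fun b _ =>
            Finset.sum_congr rfl fun c' _ => Finset.sum_congr rfl fun e _ => ?_
          congr 1
          rw [orth χ hχ (fun i => a i + b i - c' i - e i)]
          have hiff : ((fun i => a i + b i - c' i - e i) = (0 : Fin d → F))
              ↔ (a + b = c' + e) := by
            constructor
            · intro h
              funext i
              have hi := congrFun h i
              simp only [Pi.zero_apply] at hi
              show a i + b i = c' i + e i
              linear_combination hi
            · intro h
              funext i
              have hi := congrFun h i
              simp only [Pi.add_apply] at hi
              show a i + b i - c' i - e i = 0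
              linear_combination hi
          rw [if_congr hiff rfl rfl]
  have habs : ∑ ξ : Fin d → F, ‖S ξ‖ ^ 4
      = ‖((∑ ξ : Fin d → F, ‖S ξ‖ ^ 4 : ℝ) : ℂ)‖ := by
    rw [Complex.norm_real, Real.norm_eq_abs, abs_of_nonneg]
    positivity
  rw [habs, key]
  have step1 : ‖∑ a ∈ E, ∑ b ∈ E, ∑ c' ∈ E, ∑ e ∈ E,
      ((starRingEnd ℂ) (f a) * (starRingEnd ℂ) (f b) * f c' * f e)
        * (if a + b = c' + e then ((q : ℂ)) ^ d else 0)‖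
      ≤ ∑ a ∈ E, ∑ b ∈ E, ∑ c' ∈ E, ∑ e ∈ E,
          (‖f a‖ * ‖f b‖ * ‖f c'‖ * ‖f e‖)
            * (if a + b = c' + e then ((q : ℝ)) ^ d else 0) := by
    refine (norm_sum_le _ _).trans (Finset.sum_le_sum fun a _ => ?_)
    refine (norm_sum_le _ _).trans (Finset.sum_le_sum fun b _ => ?_)
    refine (norm_sum_le _ _).trans (Finset.sum_le_sum fun c' _ => ?_)
    refine (norm_sum_le _ _).trans (Finset.sum_le_sum fun e _ => ?_)
    rw [norm_mul, norm_mul, norm_mul, norm_mul, Complex.norm_conj, Complex.norm_conj]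
    refine le_of_eq ?_
    congr 1
    split_ifs
    · rw [norm_pow, Complex.norm_natCast]
    · simp
  refine step1.trans ?_
  have step2 : (∑ a ∈ E, ∑ b ∈ E, ∑ c' ∈ E, ∑ e ∈ E,
      (‖f a‖ * ‖f b‖ * ‖f c'‖ * ‖f e‖)
        * (if a + b = c' + e then ((q : ℝ)) ^ d else 0))
      ≤ ∑ a ∈ E, ∑ b ∈ E, ∑ c' ∈ E, ∑ e ∈ E,
          ((if a = c' ∧ b = e then
              (‖f a‖ * ‖f b‖ * ‖f c'‖ * ‖f e‖)
                * ((q : ℝ)) ^ d else 0)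
            + (if a = e ∧ b = c' then
              (‖f a‖ * ‖f b‖ * ‖f c'‖ * ‖f e‖)
                * ((q : ℝ)) ^ d else 0)) := by
    refine Finset.sum_le_sum fun a ha => Finset.sum_le_sum fun b hb =>
      Finset.sum_le_sum fun c' hc => Finset.sum_le_sum fun e he => ?_
    by_cases h : a + b = c' + e
    · rw [if_pos h]
      rcases hSid a ha b hb c' hc e he h with ⟨h1, h2⟩ | ⟨h1, h2⟩
      · rw [if_pos (show a = c' ∧ b = e from ⟨h1, h2⟩)]
        refine le_add_of_nonneg_right ?_
        split_ifs <;> positivity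
      · rw [if_pos (show a = e ∧ b = c' from ⟨h1, h2⟩)]
        refine le_add_of_nonneg_left ?_
        split_ifs <;> positivity
    · rw [if_neg h, mul_zero]
      refine add_nonneg ?_ ?_ <;> (split_ifs <;> positivity)
  refine step2.trans ?_
  have hsum1 : ∑ a ∈ E, ∑ b ∈ E, ∑ c' ∈ E, ∑ e ∈ E,
      (if a = c' ∧ b = e then
        (‖f a‖ * ‖f b‖ * ‖f c'‖ * ‖f e‖)
          * ((q : ℝ)) ^ d else 0)
      = (∑ x ∈ E, ‖f x‖ ^ 2) ^ 2 * ((q : ℝ)) ^ d := by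
    have inner : ∀ a ∈ E, ∀ b ∈ E, (∑ c' ∈ E, ∑ e ∈ E,
        (if a = c' ∧ b = e then
          (‖f a‖ * ‖f b‖ * ‖f c'‖ * ‖f e‖)
            * ((q : ℝ)) ^ d else 0))
        = (‖f a‖ ^ 2 * ‖f b‖ ^ 2) * ((q : ℝ)) ^ d := by
      intro a ha b hb
      rw [Finset.sum_comm]
      simp only [ite_and, Finset.sum_ite_eq, ha, hb, if_true]
      ring
    calc ∑ a ∈ E, ∑ b ∈ E, ∑ c' ∈ E, ∑ e ∈ E,
        (if a = c' ∧ b = e then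
          (‖f a‖ * ‖f b‖ * ‖f c'‖ * ‖f e‖)
            * ((q : ℝ)) ^ d else 0)
        = ∑ a ∈ E, ∑ b ∈ E,
            (‖f a‖ ^ 2 * ‖f b‖ ^ 2) * ((q : ℝ)) ^ d :=
          Finset.sum_congr rfl fun a ha => Finset.sum_congr rfl fun b hb => inner a ha b hb
      _ = (∑ x ∈ E, ‖f x‖ ^ 2) ^ 2 * ((q : ℝ)) ^ d := by
          simp only [← Finset.sum_mul]
          rw [← Finset.sum_mul_sum, sq]
  have hsum2 : ∑ a ∈ E, ∑ b ∈ E, ∑ c' ∈ E, ∑ e ∈ E,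
      (if a = e ∧ b = c' then
        (‖f a‖ * ‖f b‖ * ‖f c'‖ * ‖f e‖)
          * ((q : ℝ)) ^ d else 0)
      = (∑ x ∈ E, ‖f x‖ ^ 2) ^ 2 * ((q : ℝ)) ^ d := by
    have inner : ∀ a ∈ E, ∀ b ∈ E, (∑ c' ∈ E, ∑ e ∈ E,
        (if a = e ∧ b = c' then
          (‖f a‖ * ‖f b‖ * ‖f c'‖ * ‖f e‖)
            * ((q : ℝ)) ^ d else 0))
        = (‖f a‖ ^ 2 * ‖f b‖ ^ 2) * ((q : ℝ)) ^ d := by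
      intro a ha b hb
      simp only [ite_and, Finset.sum_ite_eq, ha, hb, if_true]
      ring
    calc ∑ a ∈ E, ∑ b ∈ E, ∑ c' ∈ E, ∑ e ∈ E,
        (if a = e ∧ b = c' then
          (‖f a‖ * ‖f b‖ * ‖f c'‖ * ‖f e‖)
            * ((q : ℝ)) ^ d else 0)
        = ∑ a ∈ E, ∑ b ∈ E,
            (‖f a‖ ^ 2 * ‖f b‖ ^ 2) * ((q : ℝ)) ^ d :=
          Finset.sum_congr rfl fun a ha => Finset.sum_congr rfl fun b hb => inner a ha b hb
      _ = (∑ x ∈ E, ‖f x‖ ^ 2) ^ 2 * ((q : ℝ)) ^ d := by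
          simp only [← Finset.sum_mul]
          rw [← Finset.sum_mul_sum, sq]
  have hsplit : ∑ a ∈ E, ∑ b ∈ E, ∑ c' ∈ E, ∑ e ∈ E,
      ((if a = c' ∧ b = e then
          (‖f a‖ * ‖f b‖ * ‖f c'‖ * ‖f e‖)
            * ((q : ℝ)) ^ d else 0)
        + (if a = e ∧ b = c' then
          (‖f a‖ * ‖f b‖ * ‖f c'‖ * ‖f e‖)
            * ((q : ℝ)) ^ d else 0))
      = (∑ a ∈ E, ∑ b ∈ E, ∑ c' ∈ E, ∑ e ∈ E,
          (if a = c' ∧ b = e then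
            (‖f a‖ * ‖f b‖ * ‖f c'‖ * ‖f e‖)
              * ((q : ℝ)) ^ d else 0))
        + (∑ a ∈ E, ∑ b ∈ E, ∑ c' ∈ E, ∑ e ∈ E,
          (if a = e ∧ b = c' then
            (‖f a‖ * ‖f b‖ * ‖f c'‖ * ‖f e‖)
              * ((q : ℝ)) ^ d else 0)) := by
    simp only [Finset.sum_add_distrib]
  rw [hsplit, hsum1, hsum2]
  refine le_of_eq ?_
  ring

end helpers

/-- Restriction (extension) estimate for large Sidon sets: for every `c > 0`
there is `C = C(c,d)`, independent of the field, such that whenever `E ⊆ F^d` is a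
Sidon set with `|E| ≥ c|F|^{d/2}` and `μ` is its surface measure,
`‖(fμ)^∧‖_{L^8(F^d)} ≤ C ‖f‖_{L²(μ)}` for all `f : F^d → ℂ`. -/
theorem sidon_extension (d : ℕ) (hd : 1 ≤ d) (c : ℝ) (hc : 0 < c) :
    ∃ C : ℝ, ∀ (F : Type) [Field F] [Fintype F] [DecidableEq F] (χ : AddChar F ℂ),
      χ ≠ 1 → ∀ E : Finset (Fin d → F),
      (∀ a ∈ E, ∀ b ∈ E, ∀ c' ∈ E, ∀ e ∈ E,
        a + b = c' + e → (a = c' ∧ b = e) ∨ (a = e ∧ b = c')) →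
      c * (Fintype.card F : ℝ) ^ ((d : ℝ) / 2) ≤ E.card →
      ∀ f : (Fin d → F) → ℂ,
        (∑ x : Fin d → F,
            ‖dft χ (fun y => f y * surfMeasure E y) x‖ ^ (8 : ℝ)) ^
            ((1 : ℝ) / 8) ≤
          C * (∑ x : Fin d → F, ‖f x‖ ^ 2 * surfMeasure E x) ^ ((1 : ℝ) / 2) := by
  refine ⟨(2 / c ^ 2) ^ ((1 : ℝ) / 8), ?_⟩
  intro F _ _ _ χ hχ E hSidon hcard f
  set q : ℕ := Fintype.card F with hq
  set n : ℕ := E.card with hn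
  have hq1 : (1 : ℝ) ≤ (q : ℝ) := by exact_mod_cast Fintype.card_pos
  have hX : (0 : ℝ) < (q : ℝ) ^ ((d : ℝ) / 2) := Real.rpow_pos_of_pos (by linarith) _
  have hnpos : (0 : ℝ) < (n : ℝ) := lt_of_lt_of_le (by positivity) hcard
  set S : (Fin d → F) → ℂ := fun ξ => ∑ x ∈ E, f x * χ (-(∑ i, ξ i * x i)) with hS
  set P : ℝ := ∑ x ∈ E, ‖f x‖ ^ 2 with hP
  have hPnn : 0 ≤ P := Finset.sum_nonneg fun x _ => by positivity
  set B : ℝ := Real.sqrt (P / n) with hB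
  have hBnn : 0 ≤ B := Real.sqrt_nonneg _
  have hB2 : B ^ 2 = P / n := Real.sq_sqrt (by positivity)
  -- the dft equals S/n
  have hdft : ∀ ξ, ‖dft χ (fun y => f y * surfMeasure E y) ξ‖
      = ‖S ξ‖ / n := by
    intro ξ
    have h1 : dft χ (fun y => f y * surfMeasure E y) ξ = (n : ℂ)⁻¹ * S ξ := by
      rw [hS]
      calc dft χ (fun y => f y * surfMeasure E y) ξ
          = ∑ x : Fin d → F,
              (if x ∈ E then (n : ℂ)⁻¹ * (f x * χ (-(∑ i, ξ i * x i))) else 0) := by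
            refine Finset.sum_congr rfl fun x _ => ?_
            by_cases hx : x ∈ E
            · simp only [surfMeasure, if_pos hx, hx, if_true]
              push_cast
              ring
            · simp [surfMeasure, hx]
        _ = ∑ x ∈ E, (n : ℂ)⁻¹ * (f x * χ (-(∑ i, ξ i * x i))) := by
            rw [Finset.sum_ite_mem, Finset.univ_inter]
        _ = (n : ℂ)⁻¹ * ∑ x ∈ E, f x * χ (-(∑ i, ξ i * x i)) := by
            rw [Finset.mul_sum]
    rw [h1, norm_mul, norm_inv, Complex.norm_natCast, div_eq_inv_mul]
  -- the L² mass
  have hmass : ∑ x : Fin d → F, ‖f x‖ ^ 2 * surfMeasure E x = P / n := by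
    calc ∑ x : Fin d → F, ‖f x‖ ^ 2 * surfMeasure E x
        = ∑ x : Fin d → F, (if x ∈ E then ‖f x‖ ^ 2 / n else 0) := by
          refine Finset.sum_congr rfl fun x _ => ?_
          by_cases hx : x ∈ E
          · simp [surfMeasure, hx, div_eq_mul_inv, ← hn]
          · simp [surfMeasure, hx]
      _ = ∑ x ∈ E, ‖f x‖ ^ 2 / n := by
          rw [Finset.sum_ite_mem, Finset.univ_inter]
      _ = P / n := by rw [hP, Finset.sum_div]
  -- L∞ bound
  have hLinf : ∀ ξ, ‖S ξ‖ / n ≤ B := by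
    intro ξ
    have h1 : ‖S ξ‖ ≤ ∑ x ∈ E, ‖f x‖ := by
      rw [hS]
      refine (norm_sum_le _ _).trans (le_of_eq (Finset.sum_congr rfl fun x _ => ?_))
      rw [norm_mul, char_norm, mul_one]
    have h2 : (∑ x ∈ E, ‖f x‖) ^ 2 ≤ (n : ℝ) * P := by
      have h2' := sq_sum_le_card_mul_sum_sq (s := E) (f := fun x => ‖f x‖)
      rw [hP, hn]
      exact_mod_cast h2'
    have h3 : Real.sqrt ((n : ℝ) * P) = B * n := by
      have h4 : (B * n) ^ 2 = (n : ℝ) * P := by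
        rw [mul_pow, hB2]
        field_simp
      rw [← h4, Real.sqrt_sq (by positivity)]
    have h5 : ‖S ξ‖ ≤ B * n := by
      rw [← h3]
      calc ‖S ξ‖ = Real.sqrt (‖S ξ‖ ^ 2) :=
            (Real.sqrt_sq (norm_nonneg _)).symm
        _ ≤ Real.sqrt ((n : ℝ) * P) := by
            refine Real.sqrt_le_sqrt ?_
            calc ‖S ξ‖ ^ 2 ≤ (∑ x ∈ E, ‖f x‖) ^ 2 :=
                  pow_le_pow_left₀ (norm_nonneg _) h1 2
              _ ≤ (n : ℝ) * P := h2
    rw [div_le_iff₀ hnpos]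
    exact h5
  -- fourth moment
  have hmom : ∑ ξ : Fin d → F, ‖S ξ‖ ^ 4
      ≤ 2 * (q : ℝ) ^ d * P ^ 2 := fourth_moment χ hχ E hSidon f
  -- cardinality bound
  have hqn : (q : ℝ) ^ d / (n : ℝ) ^ 2 ≤ 1 / c ^ 2 := by
    have hX2 : ((q : ℝ) ^ ((d : ℝ) / 2)) ^ 2 = (q : ℝ) ^ d := by
      calc ((q : ℝ) ^ ((d : ℝ) / 2)) ^ 2
          = (q : ℝ) ^ ((d : ℝ) / 2) * (q : ℝ) ^ ((d : ℝ) / 2) := sq _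
        _ = (q : ℝ) ^ ((d : ℝ) / 2 + (d : ℝ) / 2) := (Real.rpow_add (by linarith) _ _).symm
        _ = (q : ℝ) ^ ((d : ℝ)) := by norm_num
        _ = (q : ℝ) ^ d := Real.rpow_natCast _ _
    have h6 : c ^ 2 * (q : ℝ) ^ d ≤ (n : ℝ) ^ 2 := by
      have := pow_le_pow_left₀ (by positivity : (0:ℝ) ≤ c * (q : ℝ) ^ ((d : ℝ) / 2)) hcard 2
      calc c ^ 2 * (q : ℝ) ^ d = (c * (q : ℝ) ^ ((d : ℝ) / 2)) ^ 2 := by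
            rw [mul_pow, hX2]
        _ ≤ (n : ℝ) ^ 2 := this
    rw [div_le_div_iff₀ (by positivity) (by positivity)]
    nlinarith
  -- eighth moment
  have h8 : ∑ ξ : Fin d → F, (‖S ξ‖ / n) ^ 8 ≤ 2 / c ^ 2 * B ^ 8 := by
    have hPB : P = (n : ℝ) * B ^ 2 := by
      rw [hB2]
      field_simp
    calc ∑ ξ : Fin d → F, (‖S ξ‖ / n) ^ 8
        ≤ ∑ ξ : Fin d → F, B ^ 4 * (‖S ξ‖ / n) ^ 4 := by
          refine Finset.sum_le_sum fun ξ _ => ?_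
          have h0 : 0 ≤ ‖S ξ‖ / n := div_nonneg (norm_nonneg _) (Nat.cast_nonneg _)
          calc (‖S ξ‖ / n) ^ 8
              = (‖S ξ‖ / n) ^ 4 * (‖S ξ‖ / n) ^ 4 := by ring
            _ ≤ B ^ 4 * (‖S ξ‖ / n) ^ 4 := by
                refine mul_le_mul_of_nonneg_right ?_ (pow_nonneg h0 4)
                exact pow_le_pow_left₀ h0 (hLinf ξ) 4
      _ = B ^ 4 * ((∑ ξ : Fin d → F, ‖S ξ‖ ^ 4) / (n : ℝ) ^ 4) := by
          rw [← Finset.mul_sum]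
          congr 1
          rw [Finset.sum_div]
          exact Finset.sum_congr rfl fun ξ _ => by rw [div_pow]
      _ ≤ B ^ 4 * ((2 * (q : ℝ) ^ d * P ^ 2) / (n : ℝ) ^ 4) := by
          refine mul_le_mul_of_nonneg_left ?_ (pow_nonneg hBnn 4)
          exact div_le_div_of_nonneg_right hmom (pow_nonneg hnpos.le 4)
      _ = 2 * ((q : ℝ) ^ d / (n : ℝ) ^ 2) * B ^ 8 := by
          rw [hPB]
          field_simp
      _ ≤ 2 / c ^ 2 * B ^ 8 := by
          refine mul_le_mul_of_nonneg_right ?_ (pow_nonneg hBnn 8)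
          calc 2 * ((q : ℝ) ^ d / (n : ℝ) ^ 2) ≤ 2 * (1 / c ^ 2) := by linarith
            _ = 2 / c ^ 2 := by ring
  -- conclusion
  have hL : ∑ x : Fin d → F,
      ‖dft χ (fun y => f y * surfMeasure E y) x‖ ^ (8 : ℝ)
      = ∑ ξ : Fin d → F, (‖S ξ‖ / n) ^ 8 := by
    refine Finset.sum_congr rfl fun ξ _ => ?_
    rw [hdft ξ, ← Real.rpow_natCast (‖S ξ‖ / n) 8]
    norm_num
  rw [hL, hmass, ← Real.sqrt_eq_rpow, ← hB]
  calc (∑ ξ : Fin d → F, (‖S ξ‖ / n) ^ 8) ^ ((1 : ℝ) / 8)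
      ≤ (2 / c ^ 2 * B ^ 8) ^ ((1 : ℝ) / 8) := by
        refine Real.rpow_le_rpow ?_ h8 (by norm_num)
        exact Finset.sum_nonneg fun ξ _ => by positivity
    _ = (2 / c ^ 2) ^ ((1 : ℝ) / 8) * B := by
        rw [Real.mul_rpow (by positivity) (by positivity)]
        congr 1
        rw [← Real.rpow_natCast B 8, ← Real.rpow_mul hBnn]
        norm_num
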